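/- For any two real square matrices A, B of the same dimension, ‖|A| − |B|‖_F ≤ √2 · ‖A − B‖_F, where |·| is the matrix absolute value and ‖·‖_F the Frobenius norm. -/

import Mathlib

open Matrix

noncomputable def matAbs {n : Type*} [Fintype n] [DecidableEq n] (A : Matrix n n ℝ) :
    Matrix n n ℝ :=
  let hA := Matrix.posSemidef_conjTranspose_mul_self A
  (hA.1.eigenvectorUnitary : Matrix n n ℝ) *
    diagonal (fun i => ((Real.sqrt (hA.1.eigenvalues i) : ℝ) : ℝ)) *
    (star hA.1.eigenvectorUnitary : Matrix n n ℝ)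

/-- Frobenius norm of a real matrix. -/
noncomputable def frobNorm {n : Type*} [Fintype n] (M : Matrix n n ℝ) : ℝ :=
  Real.sqrt (∑ i, ∑ j, (M i j) ^ 2)

private lemma sum2_eq_trace {n : ℕ} (M : Matrix (Fin n) (Fin n) ℝ) :
    ∑ i, ∑ j, (M i j) ^ 2 = Matrix.trace (M * Mᵀ) := by
  simp [Matrix.trace, Matrix.diag, Matrix.mul_apply, sq]

private lemma sum2_unitary {n : ℕ} (E F M : Matrix (Fin n) (Fin n) ℝ)
    (hE : E * Eᵀ = 1) (hF : F * Fᵀ = 1) :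
    ∑ i, ∑ j, ((Eᵀ * M * F) i j) ^ 2 = ∑ i, ∑ j, (M i j) ^ 2 := by
  rw [sum2_eq_trace, sum2_eq_trace]
  have h1 : (Eᵀ * M * F) * (Eᵀ * M * F)ᵀ = Eᵀ * (M * Mᵀ) * E := by
    have ht : (Eᵀ * M * F)ᵀ = Fᵀ * (Mᵀ * E) := by
      rw [Matrix.transpose_mul, Matrix.transpose_mul, Matrix.transpose_transpose]
    rw [ht]
    calc (Eᵀ * M * F) * (Fᵀ * (Mᵀ * E))
        = Eᵀ * M * (F * Fᵀ) * (Mᵀ * E) := by noncomm_ring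
      _ = Eᵀ * (M * Mᵀ) * E := by rw [hF]; noncomm_ring
  rw [h1]
  calc Matrix.trace (Eᵀ * (M * Mᵀ) * E)
      = Matrix.trace (E * (Eᵀ * (M * Mᵀ))) := Matrix.trace_mul_comm _ _
    _ = Matrix.trace (M * Mᵀ) := by rw [← mul_assoc, hE, one_mul]

/-- Bessel-type inequality: if the rows of `M` are orthogonal with norms `d i`,
then the normalized coefficients of `M *ᵥ v` are bounded by the norm of `v`. -/
private lemma bessel {n : ℕ} (M : Matrix (Fin n) (Fin n) ℝ) (d : Fin n → ℝ)
    (hM : M * Mᵀ = Matrix.diagonal (fun i => d i ^ 2)) (v : Fin n → ℝ) :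
    ∑ i, (if d i = 0 then 0 else (M.mulVec v i) / d i) ^ 2 ≤ ∑ i, (v i) ^ 2 := by
  classical
  set w : Fin n → ℝ := fun i => if d i = 0 then 0 else 1 / d i with hw
  set N : Matrix (Fin n) (Fin n) ℝ := Matrix.diagonal w * M with hN
  set χ : Fin n → ℝ := fun i => if d i = 0 then 0 else 1 with hχ
  have hNentry : ∀ i j, N i j = w i * M i j := by
    intro i j; rw [hN, Matrix.diagonal_mul]
  have hNN : N * Nᵀ = Matrix.diagonal χ := by
    have : N * Nᵀ = Matrix.diagonal w * (M * Mᵀ) * Matrix.diagonal w := by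
      rw [hN, Matrix.transpose_mul, Matrix.diagonal_transpose]; noncomm_ring
    rw [this, hM, Matrix.diagonal_mul_diagonal, Matrix.diagonal_mul_diagonal]
    have hfun : (fun i => w i * d i ^ 2 * w i) = χ := by
      funext i
      by_cases h : d i = 0
      · simp [hw, hχ, h]
      · simp only [hw, hχ, if_neg h]
        field_simp
    rw [hfun]
  have hΔN : Matrix.diagonal χ * N = N := by
    ext i j
    rw [Matrix.diagonal_mul]
    by_cases h : d i = 0
    · simp [hχ, h, hNentry i j, hw]
    · simp [hχ, h]
  have hNv : ∀ i, (if d i = 0 then 0 else M.mulVec v i / d i) = N.mulVec v i := by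
    intro i
    have : N.mulVec v i = w i * M.mulVec v i := by
      rw [hN, ← Matrix.mulVec_mulVec]
      simp [Matrix.mulVec_diagonal]
    rw [this]
    by_cases h : d i = 0
    · simp [hw, h]
    · rw [if_neg h, hw]; simp [h]; ring
  have key : ∑ i, (N.mulVec v i) ^ 2 ≤ ∑ i, (v i) ^ 2 := by
    set u := Nᵀ.mulVec (N.mulVec v) with hu
    have h1 : ∑ i, v i * u i = ∑ i, (N.mulVec v i) ^ 2 := by
      have hdot : v ⬝ᵥ u = N.mulVec v ⬝ᵥ N.mulVec v := by
        rw [hu, Matrix.dotProduct_mulVec, Matrix.vecMul_transpose]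
      simpa [dotProduct, sq] using hdot
    have h2 : ∑ i, (u i) ^ 2 = ∑ i, (N.mulVec v i) ^ 2 := by
      have hdot : u ⬝ᵥ u = N.mulVec v ⬝ᵥ N.mulVec v := by
        rw [hu, Matrix.dotProduct_mulVec, Matrix.vecMul_transpose, Matrix.mulVec_mulVec, hNN]
        rw [show (Matrix.diagonal χ).mulVec (N.mulVec v) = ((Matrix.diagonal χ) * N).mulVec v from
          Matrix.mulVec_mulVec _ _ _, hΔN]
      simpa [dotProduct, sq] using hdot
    have h3 : (0:ℝ) ≤ ∑ i, (v i - u i) ^ 2 :=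
      Finset.sum_nonneg fun i _ => sq_nonneg _
    have h4 : ∑ i, (v i - u i) ^ 2
        = ∑ i, (v i) ^ 2 - 2 * (∑ i, v i * u i) + ∑ i, (u i) ^ 2 := by
      rw [Finset.mul_sum, ← Finset.sum_sub_distrib, ← Finset.sum_add_distrib]
      exact Finset.sum_congr rfl fun i _ => by ring
    rw [h4] at h3
    linarith [h1, h2, h3]
  calc ∑ i, (if d i = 0 then 0 else M.mulVec v i / d i) ^ 2
      = ∑ i, (N.mulVec v i) ^ 2 := Finset.sum_congr rfl fun i _ => by rw [hNv i]
    _ ≤ ∑ i, (v i) ^ 2 := key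

private lemma keyineq (p q x g h : ℝ) (hp : 0 ≤ p) (hq : 0 ≤ q)
    (hx : (p + q) * x = g + h) (hg0 : p = 0 → g = 0) (hh0 : q = 0 → h = 0)
    (hx0 : p = 0 → q = 0 → x = 0) :
    x ^ 2 ≤ (if p = 0 then 0 else g / p) ^ 2 + (if q = 0 then 0 else h / q) ^ 2 := by
  set α : ℝ := if p = 0 then 0 else g / p with hα
  set β : ℝ := if q = 0 then 0 else h / q with hβ
  have hpα : p * α = g := by
    by_cases h1 : p = 0
    · simp [hα, h1, hg0 h1]
    · rw [hα, if_neg h1]; field_simp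
  have hqβ : q * β = h := by
    by_cases h1 : q = 0
    · simp [hβ, h1, hh0 h1]
    · rw [hβ, if_neg h1]; field_simp
  rcases eq_or_lt_of_le (add_nonneg hp hq) with hpq | hpq
  · have hp0 : p = 0 := by linarith
    have hq0 : q = 0 := by linarith
    rw [hx0 hp0 hq0]
    have h0 : (0:ℝ) ^ 2 = 0 := by norm_num
    rw [h0]
    exact add_nonneg (sq_nonneg _) (sq_nonneg _)
  · have hx' : (p + q) * x = p * α + q * β := by rw [hx, hpα, hqβ]
    have h1 : (p + q) ^ 2 * x ^ 2 ≤ (p + q) ^ 2 * (α ^ 2 + β ^ 2) := by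
      have e : (p + q) ^ 2 * x ^ 2 = (p * α + q * β) ^ 2 := by
        rw [← mul_pow, hx']
      rw [e]
      nlinarith [sq_nonneg (p * β - q * α), mul_nonneg hp hq, sq_nonneg (α - β),
        sq_nonneg (α + β), mul_nonneg (mul_nonneg hp hq) (sq_nonneg (α - β))]
    exact le_of_mul_le_mul_left h1 (by positivity)

private lemma conj_sq_aux {n : ℕ} (U : Matrix.unitaryGroup (Fin n) ℝ) (d e : Fin n → ℝ)
    (h : ∀ i, d i * d i = e i) :
    (U : Matrix (Fin n) (Fin n) ℝ) * diagonal d * (star U : Matrix (Fin n) (Fin n) ℝ) *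
      ((U : Matrix (Fin n) (Fin n) ℝ) * diagonal d * (star U : Matrix (Fin n) (Fin n) ℝ))
      = (U : Matrix (Fin n) (Fin n) ℝ) * diagonal e * (star U : Matrix (Fin n) (Fin n) ℝ) := by
  have hU : (star U : Matrix (Fin n) (Fin n) ℝ) * (U : Matrix (Fin n) (Fin n) ℝ) = 1 :=
    Matrix.UnitaryGroup.star_mul_self U
  calc _ = (U : Matrix (Fin n) (Fin n) ℝ) * (diagonal d * ((star U : Matrix (Fin n) (Fin n) ℝ) *
        (U : Matrix (Fin n) (Fin n) ℝ)) * diagonal d) * (star U : Matrix (Fin n) (Fin n) ℝ) := by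
        simp only [mul_assoc]
    _ = _ := by
        rw [hU, mul_one, diagonal_mul_diagonal, show (fun i => d i * d i) = e from funext h]

private lemma matAbs_psd {n : ℕ} (A : Matrix (Fin n) (Fin n) ℝ) : (matAbs A).PosSemidef := by
  dsimp only [matAbs]
  rw [Matrix.star_eq_conjTranspose]
  exact (posSemidef_diagonal_iff.mpr fun i => Real.sqrt_nonneg _).mul_mul_conjTranspose_same _

private lemma matAbs_sq {n : ℕ} (A : Matrix (Fin n) (Fin n) ℝ) : matAbs A * matAbs A = Aᴴ * A := by
  have hspec := (Matrix.posSemidef_conjTranspose_mul_self A).1.spectral_theorem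
  rw [Unitary.conjStarAlgAut_apply] at hspec
  dsimp only [matAbs]
  conv_rhs => rw [hspec]
  exact conj_sq_aux _ _ _ fun i =>
    Real.mul_self_sqrt ((Matrix.posSemidef_conjTranspose_mul_self A).eigenvalues_nonneg i)

theorem matAbs_frobenius_perturbation (n : ℕ) (A B : Matrix (Fin n) (Fin n) ℝ) :
    frobNorm (matAbs A - matAbs B) ≤ Real.sqrt 2 * frobNorm (A - B) := by
  classical
  set C := A - B with hC
  set P := matAbs A with hPdef
  set Q := matAbs B with hQdef
  have hPsd : P.PosSemidef := matAbs_psd A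
  have hQsd : Q.PosSemidef := matAbs_psd B
  have hP2 : P * P = Aᵀ * A := by
    rw [← Matrix.conjTranspose_eq_transpose_of_trivial]
    exact matAbs_sq A
  have hQ2 : Q * Q = Bᵀ * B := by
    rw [← Matrix.conjTranspose_eq_transpose_of_trivial]
    exact matAbs_sq B
  have hPH : P.IsHermitian := hPsd.1
  have hQH : Q.IsHermitian := hQsd.1
  set E : Matrix (Fin n) (Fin n) ℝ := (Matrix.IsHermitian.eigenvectorUnitary hPH :
    Matrix (Fin n) (Fin n) ℝ) with hEdef
  set F : Matrix (Fin n) (Fin n) ℝ := (Matrix.IsHermitian.eigenvectorUnitary hQH :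
    Matrix (Fin n) (Fin n) ℝ) with hFdef
  set p : Fin n → ℝ := hPH.eigenvalues with hpdef
  set q : Fin n → ℝ := hQH.eigenvalues with hqdef
  have hp0 : ∀ i, 0 ≤ p i := fun i => hPsd.eigenvalues_nonneg i
  have hq0 : ∀ j, 0 ≤ q j := fun j => hQsd.eigenvalues_nonneg j
  have hE1 : Eᵀ * E = 1 := by
    have := Matrix.UnitaryGroup.star_mul_self (Matrix.IsHermitian.eigenvectorUnitary hPH)
    rwa [Matrix.star_eq_conjTranspose, Matrix.conjTranspose_eq_transpose_of_trivial] at this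
  have hE2 : E * Eᵀ = 1 := by
    have := Matrix.mem_unitaryGroup_iff.mp (Matrix.IsHermitian.eigenvectorUnitary hPH).2
    rwa [Matrix.star_eq_conjTranspose, Matrix.conjTranspose_eq_transpose_of_trivial] at this
  have hF1 : Fᵀ * F = 1 := by
    have := Matrix.UnitaryGroup.star_mul_self (Matrix.IsHermitian.eigenvectorUnitary hQH)
    rwa [Matrix.star_eq_conjTranspose, Matrix.conjTranspose_eq_transpose_of_trivial] at this
  have hF2 : F * Fᵀ = 1 := by
    have := Matrix.mem_unitaryGroup_iff.mp (Matrix.IsHermitian.eigenvectorUnitary hQH).2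
    rwa [Matrix.star_eq_conjTranspose, Matrix.conjTranspose_eq_transpose_of_trivial] at this
  have hPspec : P = E * Matrix.diagonal p * Eᵀ := by
    have := hPH.spectral_theorem
    rwa [Unitary.conjStarAlgAut_apply, Matrix.star_eq_conjTranspose,
      Matrix.conjTranspose_eq_transpose_of_trivial,
      show (RCLike.ofReal ∘ hPH.eigenvalues : Fin n → ℝ) = p from funext fun i => rfl] at this
  have hQspec : Q = F * Matrix.diagonal q * Fᵀ := by
    have := hQH.spectral_theorem
    rwa [Unitary.conjStarAlgAut_apply, Matrix.star_eq_conjTranspose,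
      Matrix.conjTranspose_eq_transpose_of_trivial,
      show (RCLike.ofReal ∘ hQH.eigenvalues : Fin n → ℝ) = q from funext fun i => rfl] at this
  have hEP : Eᵀ * P = Matrix.diagonal p * Eᵀ := by
    rw [hPspec]
    calc Eᵀ * (E * Matrix.diagonal p * Eᵀ) = (Eᵀ * E) * (Matrix.diagonal p * Eᵀ) := by
          noncomm_ring
      _ = Matrix.diagonal p * Eᵀ := by rw [hE1, one_mul]
  have hQF : Q * F = F * Matrix.diagonal q := by
    rw [hQspec]
    calc F * Matrix.diagonal q * Fᵀ * F = F * Matrix.diagonal q * (Fᵀ * F) := by noncomm_ring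
      _ = F * Matrix.diagonal q := by rw [hF1, mul_one]
  have hFQ : Fᵀ * Q = Matrix.diagonal q * Fᵀ := by
    rw [hQspec]
    calc Fᵀ * (F * Matrix.diagonal q * Fᵀ) = (Fᵀ * F) * (Matrix.diagonal q * Fᵀ) := by
          noncomm_ring
      _ = Matrix.diagonal q * Fᵀ := by rw [hF1, one_mul]
  set S : Matrix (Fin n) (Fin n) ℝ := Eᵀ * (P - Q) * F with hSdef
  set G : Matrix (Fin n) (Fin n) ℝ := (Eᵀ * Aᵀ) * (C * F) with hGdef
  set H : Matrix (Fin n) (Fin n) ℝ := (Eᵀ * Cᵀ) * (B * F) with hHdef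
  -- main algebraic identity
  have hmain : Matrix.diagonal p * S + S * Matrix.diagonal q = G + H := by
    rw [hSdef, hGdef, hHdef]
    calc Matrix.diagonal p * (Eᵀ * (P - Q) * F) + Eᵀ * (P - Q) * F * Matrix.diagonal q
        = (Matrix.diagonal p * Eᵀ) * ((P - Q) * F) + (Eᵀ * (P - Q)) * (F * Matrix.diagonal q) := by
          noncomm_ring
      _ = (Eᵀ * P) * ((P - Q) * F) + (Eᵀ * (P - Q)) * (Q * F) := by rw [hEP, hQF]
      _ = Eᵀ * (P * P - Q * Q) * F := by noncomm_ring
      _ = Eᵀ * (Aᵀ * C + Cᵀ * B) * F := by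
          rw [hP2, hQ2, hC, Matrix.transpose_sub]; noncomm_ring
      _ = (Eᵀ * Aᵀ) * (C * F) + (Eᵀ * Cᵀ) * (B * F) := by noncomm_ring
  have hpt : ∀ i j, (p i + q j) * S i j = G i j + H i j := by
    intro i j
    have h := congrFun (congrFun hmain i) j
    simp only [Matrix.add_apply, Matrix.diagonal_mul, Matrix.mul_diagonal] at h
    linear_combination h
  -- zero case identity
  have hS2 : S = Matrix.diagonal p * (Eᵀ * F) - (Eᵀ * F) * Matrix.diagonal q := by
    rw [hSdef]
    calc Eᵀ * (P - Q) * F = (Eᵀ * P) * F - Eᵀ * (Q * F) := by noncomm_ring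
      _ = (Matrix.diagonal p * Eᵀ) * F - Eᵀ * (F * Matrix.diagonal q) := by rw [hEP, hQF]
      _ = Matrix.diagonal p * (Eᵀ * F) - (Eᵀ * F) * Matrix.diagonal q := by noncomm_ring
  have hSzero : ∀ i j, p i = 0 → q j = 0 → S i j = 0 := by
    intro i j hpi hqj
    have h := congrFun (congrFun hS2 i) j
    simp only [Matrix.sub_apply, Matrix.diagonal_mul, Matrix.mul_diagonal, hpi, hqj] at h
    simpa using h
  -- row/column orthogonality facts
  have hM1 : (Eᵀ * Aᵀ) * (Eᵀ * Aᵀ)ᵀ = Matrix.diagonal (fun i => p i ^ 2) := by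
    have ht : (Eᵀ * Aᵀ)ᵀ = A * E := by
      rw [Matrix.transpose_mul, Matrix.transpose_transpose, Matrix.transpose_transpose]
    rw [ht]
    calc (Eᵀ * Aᵀ) * (A * E) = Eᵀ * (Aᵀ * A) * E := by noncomm_ring
      _ = Eᵀ * (P * P) * E := by rw [hP2]
      _ = (Eᵀ * P) * (P * E) := by noncomm_ring
      _ = (Matrix.diagonal p * Eᵀ) * (P * E) := by rw [hEP]
      _ = Matrix.diagonal p * ((Eᵀ * P) * E) := by noncomm_ring
      _ = Matrix.diagonal p * ((Matrix.diagonal p * Eᵀ) * E) := by rw [hEP]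
      _ = Matrix.diagonal p * (Matrix.diagonal p * (Eᵀ * E)) := by noncomm_ring
      _ = Matrix.diagonal (fun i => p i ^ 2) := by
          rw [hE1, mul_one, Matrix.diagonal_mul_diagonal]
          congr 1; funext i; ring
  have hM2 : (B * F)ᵀ * ((B * F)ᵀ)ᵀ = Matrix.diagonal (fun j => q j ^ 2) := by
    rw [Matrix.transpose_transpose, Matrix.transpose_mul]
    calc Fᵀ * Bᵀ * (B * F) = Fᵀ * (Bᵀ * B) * F := by noncomm_ring
      _ = Fᵀ * (Q * Q) * F := by rw [hQ2]
      _ = (Fᵀ * Q) * (Q * F) := by noncomm_ring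
      _ = (Matrix.diagonal q * Fᵀ) * (Q * F) := by rw [hFQ]
      _ = Matrix.diagonal q * ((Fᵀ * Q) * F) := by noncomm_ring
      _ = Matrix.diagonal q * ((Matrix.diagonal q * Fᵀ) * F) := by rw [hFQ]
      _ = Matrix.diagonal q * (Matrix.diagonal q * (Fᵀ * F)) := by noncomm_ring
      _ = Matrix.diagonal (fun j => q j ^ 2) := by
          rw [hF1, mul_one, Matrix.diagonal_mul_diagonal]
          congr 1; funext j; ring
  -- vanishing rows / columns
  have hrowzero : ∀ i, p i = 0 → ∀ k, (Eᵀ * Aᵀ) i k = 0 := by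
    intro i hpi k
    have h0 := congrFun (congrFun hM1 i) i
    rw [Matrix.mul_apply] at h0
    simp only [Matrix.transpose_apply, Matrix.diagonal_apply_eq, hpi] at h0
    have hsum : ∑ x, ((Eᵀ * Aᵀ) i x) ^ 2 = 0 := by
      calc ∑ x, ((Eᵀ * Aᵀ) i x) ^ 2 = ∑ x, (Eᵀ * Aᵀ) i x * (Eᵀ * Aᵀ) i x :=
            Finset.sum_congr rfl fun x _ => by rw [sq]
        _ = (0:ℝ) ^ 2 := h0
        _ = 0 := by norm_num
    have hk := (Finset.sum_eq_zero_iff_of_nonneg (fun x _ => sq_nonneg _)).mp hsum k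
      (Finset.mem_univ k)
    exact (pow_eq_zero_iff two_ne_zero).mp hk
  have hcolzero : ∀ j, q j = 0 → ∀ k, (B * F) k j = 0 := by
    intro j hqj k
    have h0 := congrFun (congrFun hM2 j) j
    rw [Matrix.mul_apply] at h0
    simp only [Matrix.transpose_apply, Matrix.diagonal_apply_eq, hqj] at h0
    have hsum : ∑ x, ((B * F) x j) ^ 2 = 0 := by
      calc ∑ x, ((B * F) x j) ^ 2 = ∑ x, (B * F) x j * (B * F) x j :=
            Finset.sum_congr rfl fun x _ => by rw [sq]
        _ = (0:ℝ) ^ 2 := h0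
        _ = 0 := by norm_num
    have hk := (Finset.sum_eq_zero_iff_of_nonneg (fun x _ => sq_nonneg _)).mp hsum k
      (Finset.mem_univ k)
    exact (pow_eq_zero_iff two_ne_zero).mp hk
  have hGzero : ∀ i j, p i = 0 → G i j = 0 := by
    intro i j hpi
    rw [hGdef, Matrix.mul_apply]
    exact Finset.sum_eq_zero fun k _ => by rw [hrowzero i hpi k, zero_mul]
  have hHzero : ∀ i j, q j = 0 → H i j = 0 := by
    intro i j hqj
    rw [hHdef, Matrix.mul_apply]
    exact Finset.sum_eq_zero fun k _ => by rw [hcolzero j hqj k, mul_zero]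
  -- Bessel bounds
  have hbG : ∑ j, ∑ i, (if p i = 0 then 0 else G i j / p i) ^ 2
      ≤ ∑ j, ∑ i, ((C * F) i j) ^ 2 := by
    apply Finset.sum_le_sum
    intro j _
    have hb := bessel (Eᵀ * Aᵀ) p hM1 (fun k => (C * F) k j)
    have heq : ∀ i, (Eᵀ * Aᵀ).mulVec (fun k => (C * F) k j) i = G i j := by
      intro i
      rw [hGdef, Matrix.mul_apply]
      simp [Matrix.mulVec, dotProduct]
    calc ∑ i, (if p i = 0 then 0 else G i j / p i) ^ 2
        = ∑ i, (if p i = 0 then 0 else (Eᵀ * Aᵀ).mulVec (fun k => (C * F) k j) i / p i) ^ 2 :=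
          Finset.sum_congr rfl fun i _ => by rw [heq i]
      _ ≤ ∑ i, ((C * F) i j) ^ 2 := hb
  have hbH : ∑ i, ∑ j, (if q j = 0 then 0 else H i j / q j) ^ 2
      ≤ ∑ i, ∑ j, ((Eᵀ * Cᵀ) i j) ^ 2 := by
    apply Finset.sum_le_sum
    intro i _
    have hb := bessel ((B * F)ᵀ) q hM2 (fun k => (Eᵀ * Cᵀ) i k)
    have heq : ∀ j, ((B * F)ᵀ).mulVec (fun k => (Eᵀ * Cᵀ) i k) j = H i j := by
      intro j
      rw [hHdef, Matrix.mul_apply]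
      simp [Matrix.mulVec, dotProduct, Matrix.transpose_apply, mul_comm]
    calc ∑ j, (if q j = 0 then 0 else H i j / q j) ^ 2
        = ∑ j, (if q j = 0 then 0 else ((B * F)ᵀ).mulVec (fun k => (Eᵀ * Cᵀ) i k) j / q j) ^ 2 :=
          Finset.sum_congr rfl fun j _ => by rw [heq j]
      _ ≤ ∑ j, ((Eᵀ * Cᵀ) i j) ^ 2 := hb
  -- norms are preserved
  have hCF : ∑ i, ∑ j, ((C * F) i j) ^ 2 = ∑ i, ∑ j, (C i j) ^ 2 := by
    have h := sum2_unitary 1 F C (by simp) hF2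
    simpa using h
  have hEC : ∑ i, ∑ j, ((Eᵀ * Cᵀ) i j) ^ 2 = ∑ i, ∑ j, (C i j) ^ 2 := by
    have h := sum2_unitary E 1 Cᵀ hE2 (by simp)
    have h2 : ∑ i, ∑ j, ((Eᵀ * Cᵀ) i j) ^ 2 = ∑ i, ∑ j, (Cᵀ i j) ^ 2 := by
      simpa using h
    rw [h2]
    rw [Finset.sum_comm]
    exact Finset.sum_congr rfl fun j _ => Finset.sum_congr rfl fun i _ => by
      rw [Matrix.transpose_apply]
  -- pointwise bound and summation
  have hptwise : ∀ i j, (S i j) ^ 2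
      ≤ (if p i = 0 then 0 else G i j / p i) ^ 2 + (if q j = 0 then 0 else H i j / q j) ^ 2 := by
    intro i j
    exact keyineq (p i) (q j) (S i j) (G i j) (H i j) (hp0 i) (hq0 j) (hpt i j)
      (hGzero i j) (hHzero i j) (hSzero i j)
  have hsumS : ∑ i, ∑ j, (S i j) ^ 2 ≤ 2 * ∑ i, ∑ j, (C i j) ^ 2 := by
    have h1 : ∑ i, ∑ j, (S i j) ^ 2
        ≤ ∑ i, ∑ j, ((if p i = 0 then 0 else G i j / p i) ^ 2
            + (if q j = 0 then 0 else H i j / q j) ^ 2) :=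
      Finset.sum_le_sum fun i _ => Finset.sum_le_sum fun j _ => hptwise i j
    have h2 : ∑ i, ∑ j, ((if p i = 0 then 0 else G i j / p i) ^ 2
            + (if q j = 0 then 0 else H i j / q j) ^ 2)
        = (∑ i, ∑ j, (if p i = 0 then 0 else G i j / p i) ^ 2)
          + ∑ i, ∑ j, (if q j = 0 then 0 else H i j / q j) ^ 2 := by
      rw [← Finset.sum_add_distrib]
      exact Finset.sum_congr rfl fun i _ => by rw [← Finset.sum_add_distrib]
    have h3 : ∑ i, ∑ j, (if p i = 0 then 0 else G i j / p i) ^ 2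
        ≤ ∑ i, ∑ j, (C i j) ^ 2 := by
      rw [Finset.sum_comm]
      exact hbG.trans (le_of_eq (Finset.sum_comm.trans hCF))
    have h4 : ∑ i, ∑ j, (if q j = 0 then 0 else H i j / q j) ^ 2
        ≤ ∑ i, ∑ j, (C i j) ^ 2 :=
      hbH.trans (le_of_eq hEC)
    calc ∑ i, ∑ j, (S i j) ^ 2 ≤ _ := h1
      _ = _ := h2
      _ ≤ (∑ i, ∑ j, (C i j) ^ 2) + ∑ i, ∑ j, (C i j) ^ 2 := add_le_add h3 h4
      _ = 2 * ∑ i, ∑ j, (C i j) ^ 2 := by ring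
  have hPQ : ∑ i, ∑ j, ((P - Q) i j) ^ 2 = ∑ i, ∑ j, (S i j) ^ 2 :=
    (sum2_unitary E F (P - Q) hE2 hF2).symm
  -- final assembly
  rw [frobNorm, frobNorm]
  have hfinal : ∑ i, ∑ j, ((P - Q) i j) ^ 2 ≤ 2 * ∑ i, ∑ j, (C i j) ^ 2 := by
    rw [hPQ]; exact hsumS
  have h2sqrt : Real.sqrt 2 * Real.sqrt (∑ i, ∑ j, ((A - B) i j) ^ 2)
      = Real.sqrt (2 * ∑ i, ∑ j, ((A - B) i j) ^ 2) :=
    (Real.sqrt_mul (by norm_num) _).symm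
  rw [h2sqrt]
  apply Real.sqrt_le_sqrt
  exact hfinal
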